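/- Let f be the infinite Fibonacci word (fixed point of 0→01, 1→0 over {0,1}), and let s(n) be the second-least-significant digit of the Zeckendorf (Fibonacci) representation of n, with s'(n) = 1 − s(n). Then for all n ≥ 0, f[n+1] = (∑_{i=0}^{n} s'(i)) mod 2. -/

import Mathlib

/-- The Fibonacci morphism 0 → 01, 1 → 0. -/
def fibMor (a : ℕ) : List ℕ := if a = 0 then [0, 1] else [0]

/-- The infinite Fibonacci word, as its n-th letter: obtained from iterating the
morphism on the letter 0 (the iterates are prefixes of one another and the
(n+1)-st iterate has length > n). -/
def fibWord (n : ℕ) : ℕ := ((fun w => w.flatMap fibMor)^[n + 1] [0]).getD n 0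

open Finset
set_option linter.unusedSectionVars false
lemma succ_le_fib (n : ℕ) : n + 1 ≤ Nat.fib (n + 2) := by
  induction n with
  | zero => decide
  | succ n ih =>
    have h1 : 0 < Nat.fib (n+1) := Nat.fib_pos.mpr (Nat.succ_pos n)
    have h2 : Nat.fib (n+3) = Nat.fib (n+1) + Nat.fib (n+2) := Nat.fib_add_two
    show n + 2 ≤ Nat.fib (n + 3)
    omega

abbrev Wd (k : ℕ) : List ℕ := (fun w => w.flatMap fibMor)^[k] [0]

lemma Wd_succ_succ (k : ℕ) : Wd (k+2) = Wd (k+1) ++ Wd k := by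
  induction k with
  | zero => rfl
  | succ k ih =>
    have h1 : Wd (k+3) = (Wd (k+2)).flatMap fibMor := Function.iterate_succ_apply' _ _ _
    have h2 : Wd (k+2) = (Wd (k+1)).flatMap fibMor := Function.iterate_succ_apply' _ _ _
    have h3 : Wd (k+1) = (Wd k).flatMap fibMor := Function.iterate_succ_apply' _ _ _
    rw [h2, h3, h1, ih, List.flatMap_append, h3]

lemma Wd_length (k : ℕ) : (Wd k).length = Nat.fib (k+2) := by
  induction k using Nat.strong_induction_on with
  | _ k ih =>
    match k with
    | 0 => rfl
    | 1 => rfl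
    | (k+2) =>
      rw [Wd_succ_succ, List.length_append, ih (k+1) (by omega), ih k (by omega)]
      have h : Nat.fib (k+4) = Nat.fib (k+2) + Nat.fib (k+3) := Nat.fib_add_two
      have e1 : Nat.fib (k+1+2) = Nat.fib (k+3) := rfl
      have e2 : Nat.fib (k+2+2) = Nat.fib (k+4) := rfl
      rw [e1, e2]
      omega

lemma Wd_prefix (k : ℕ) : Wd k <+: Wd (k+1) := by
  cases k with
  | zero => exact ⟨[1], rfl⟩
  | succ k => rw [Wd_succ_succ]; exact List.prefix_append _ _

lemma Wd_prefix_le {a b : ℕ} (h : a ≤ b) : Wd a <+: Wd b := by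
  induction b, h using Nat.le_induction with
  | base => exact List.prefix_refl _
  | succ b hb ih => exact ih.trans (Wd_prefix b)

lemma getD_prefix {u v : List ℕ} (h : u <+: v) {n : ℕ} (hn : n < u.length) :
    v.getD n 0 = u.getD n 0 := by
  obtain ⟨t, rfl⟩ := h; exact List.getD_append u t 0 n hn

lemma fibWord_eq_W (k n : ℕ) (h : n < (Wd k).length) : (Wd k).getD n 0 = fibWord n := by
  have hn : n < (Wd (n+1)).length := by
    rw [Wd_length]; exact lt_of_lt_of_le (by omega) (succ_le_fib (n+1))
  show (Wd k).getD n 0 = (Wd (n+1)).getD n 0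
  rcases le_total k (n+1) with hk | hk
  · rw [getD_prefix (Wd_prefix_le hk) h]
  · rw [getD_prefix (Wd_prefix_le hk) hn]

lemma getD_append_len (l l' : List ℕ) (j : ℕ) :
    (l ++ l').getD (l.length + j) 0 = l'.getD j 0 := by
  rw [List.getD_append_right] <;> simp

lemma fibWord_shift (k j : ℕ) (hj : j < Nat.fib (k+2)) :
    fibWord (Nat.fib (k+3) + j) = fibWord j := by
  have hlen1 : (Wd (k+1)).length = Nat.fib (k+3) := Wd_length _
  have hfib : Nat.fib (k+4) = Nat.fib (k+2) + Nat.fib (k+3) := Nat.fib_add_two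
  have hlt : Nat.fib (k+3) + j < (Wd (k+2)).length := by
    rw [Wd_length]
    show Nat.fib (k+3) + j < Nat.fib (k+4)
    omega
  rw [← fibWord_eq_W (k+2) _ hlt, Wd_succ_succ, ← hlen1, getD_append_len,
    fibWord_eq_W k j (by rw [Wd_length]; exact hj)]

lemma exists_fib_decomp (m : ℕ) (hm : 3 ≤ m) :
    ∃ k j, j < Nat.fib (k+3) ∧ m = Nat.fib (k+4) + j := by
  set K := Nat.findGreatest (fun x => Nat.fib x ≤ m) (m+2) with hKdef
  have h4 : Nat.fib 4 ≤ m := by rw [show Nat.fib 4 = 3 from rfl]; exact hm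
  have hK4 : 4 ≤ K := Nat.le_findGreatest (by omega) h4
  have hKspec : Nat.fib K ≤ m := Nat.findGreatest_spec (P := fun x => Nat.fib x ≤ m) (by omega) h4
  have hKb : K ≤ m + 2 := Nat.findGreatest_le _
  have hlt : m < Nat.fib (K+1) := by
    by_cases h : K + 1 ≤ m + 2
    · by_contra h'
      push_neg at h'
      exact Nat.findGreatest_is_greatest (Nat.lt_succ_self K) h h'
    · have h1 : m + 1 ≤ Nat.fib (m+2) := succ_le_fib m
      have h2 : Nat.fib (m+2) ≤ Nat.fib K := Nat.fib_mono (by omega)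
      omega
  refine ⟨K - 4, m - Nat.fib K, ?_, ?_⟩
  · have e : K - 4 + 4 = K := by omega
    have e3 : K - 4 + 3 = K - 1 := by omega
    have hfib : Nat.fib (K - 1 + 2) = Nat.fib (K - 1) + Nat.fib (K - 1 + 1) := Nat.fib_add_two
    have e1 : K - 1 + 2 = K + 1 := by omega
    have e2 : K - 1 + 1 = K := by omega
    rw [e1, e2] at hfib
    rw [e3]
    omega
  · have e : K - 4 + 4 = K := by omega
    rw [e]; omega



/-- Sum of non-adjacent Zeckendorf digits is `< fib (T+2)`. -/
lemma zeck_bound (a : ℕ → ℕ) (ha1 : ∀ i, a i ≤ 1)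
    (ha2 : ∀ i, ¬ (a i = 1 ∧ a (i+1) = 1)) :
    ∀ T, ∑ i ∈ range T, a i * Nat.fib (i + 2) < Nat.fib (T + 2) := by
  intro T
  induction T using Nat.strong_induction_on with
  | _ T ih =>
    match T with
    | 0 => simpa using Nat.fib_pos.mpr (by norm_num)
    | 1 =>
      have := ha1 0
      simp only [range_one, sum_singleton]
      have : a 0 * Nat.fib 2 ≤ 1 := by simpa [Nat.fib] using this
      calc a 0 * Nat.fib 2 ≤ 1 := this
        _ < Nat.fib 3 := by decide
    | (T + 2) =>
      rw [Finset.sum_range_succ]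
      have htop := ha1 (T + 1)
      have hfib : Nat.fib (T + 4) = Nat.fib (T + 2) + Nat.fib (T + 3) := Nat.fib_add_two
      rcases Nat.le_one_iff_eq_zero_or_eq_one.mp htop with h | h
      · have h1 := ih (T + 1) (by omega)
        have h2 : Nat.fib (T + 3) ≤ Nat.fib (T + 4) := Nat.fib_le_fib_succ
        have e1 : Nat.fib (T+1+2) = Nat.fib (T+3) := rfl
        have e2 : Nat.fib (T+2+2) = Nat.fib (T+4) := rfl
        rw [h, e2]
        simpa using by omega
      · have hT : a T = 0 := by
          have := ha2 T; have := ha1 T; omega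
        rw [Finset.sum_range_succ, hT, h]
        have h1 := ih T (by omega)
        have e1 : Nat.fib (T+1+2) = Nat.fib (T+3) := rfl
        have e2 : Nat.fib (T+2+2) = Nat.fib (T+4) := rfl
        rw [e2]
        simpa using by omega

/-- Uniqueness of Zeckendorf representations. -/
lemma zeck_unique (a b : ℕ → ℕ) (ha1 : ∀ i, a i ≤ 1)
    (ha2 : ∀ i, ¬ (a i = 1 ∧ a (i+1) = 1))
    (hb1 : ∀ i, b i ≤ 1) (hb2 : ∀ i, ¬ (b i = 1 ∧ b (i+1) = 1)) :
    ∀ T, ∑ i ∈ range T, a i * Nat.fib (i + 2) = ∑ i ∈ range T, b i * Nat.fib (i + 2) →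
      ∀ i < T, a i = b i := by
  intro T
  induction T with
  | zero => intro _ i hi; omega
  | succ T ih =>
    intro hsum i hi
    rw [Finset.sum_range_succ, Finset.sum_range_succ] at hsum
    have hba := zeck_bound b hb1 hb2 T
    have hab := zeck_bound a ha1 ha2 T
    have hta := ha1 T
    have htb := hb1 T
    have htop : a T = b T := by
      rcases Nat.le_one_iff_eq_zero_or_eq_one.mp hta with h | h <;>
      rcases Nat.le_one_iff_eq_zero_or_eq_one.mp htb with h' | h' <;>
        simp [h, h'] at hsum ⊢ <;> omega
    rw [htop] at hsum
    have hsum' : ∑ i ∈ range T, a i * Nat.fib (i + 2)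
        = ∑ i ∈ range T, b i * Nat.fib (i + 2) := by omega
    rcases Nat.lt_succ_iff_lt_or_eq.mp hi with h | h
    · exact ih hsum' i h
    · rw [h]; exact htop


section DigitPart

variable (d : ℕ → ℕ → ℕ)
variable (hd1 : ∀ m i, d m i ≤ 1)
variable (hd2 : ∀ m i, ¬ (d m i = 1 ∧ d m (i + 1) = 1))
variable (hd3 : ∀ m, m = ∑ i ∈ Finset.range (m + 1), d m i * Nat.fib (i + 2))
variable (hd4 : ∀ m i, m + 1 ≤ i → d m i = 0)

include hd1 hd2 hd3 hd4

lemma digit_sum_ext (m T : ℕ) (hT : m + 1 ≤ T) :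
    ∑ i ∈ range T, d m i * Nat.fib (i + 2) = m := by
  have h := Finset.sum_subset (f := fun i => d m i * Nat.fib (i + 2))
    (Finset.range_subset_range.mpr hT)
    (fun x _ hx => by
      have hz : d m x = 0 := hd4 m x (by simpa using hx)
      simp [hz])
  rw [← h]
  exact (hd3 m).symm

lemma digit_bound (m i : ℕ) (h : d m i = 1) : Nat.fib (i + 2) ≤ m := by
  by_cases hi : i ≤ m
  · have hmem : i ∈ range (m + 1) := Finset.mem_range.mpr (by omega)
    have := Finset.single_le_sum
      (f := fun i => d m i * Nat.fib (i + 2)) (fun j _ => Nat.zero_le _) hmem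
    rw [← hd3 m] at this
    calc Nat.fib (i + 2) = d m i * Nat.fib (i + 2) := by rw [h, one_mul]
      _ ≤ m := this
  · have := hd4 m i (by omega); omega

lemma digit_zero (m i : ℕ) (h : m < Nat.fib (i + 2)) : d m i = 0 := by
  have h1 := hd1 m i
  rcases Nat.le_one_iff_eq_zero_or_eq_one.mp h1 with h' | h'
  · exact h'
  · have := digit_bound d hd1 hd2 hd3 hd4 m i h'; omega

lemma digit_shift (k t : ℕ) (ht : t < Nat.fib (k + 3)) :
    d (Nat.fib (k + 4) + t) 1 = d t 1 := by
  set b : ℕ → ℕ := fun i => if i = k + 2 then 1 else d t i with hb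
  have hmono : ∀ i, k + 1 ≤ i → d t i = 0 := by
    intro i hi
    apply digit_zero d hd1 hd2 hd3 hd4 t i
    have hm := Nat.fib_mono (show k + 3 ≤ i + 2 by omega)
    omega
  have hb1 : ∀ i, b i ≤ 1 := by
    intro i; simp only [hb]; split
    · omega
    · exact hd1 t i
  have hb2 : ∀ i, ¬ (b i = 1 ∧ b (i+1) = 1) := by
    intro i ⟨h1, h2⟩
    by_cases hik : i = k + 2
    · simp only [hb, hik] at h2
      rw [if_neg (by omega)] at h2
      have hmm := hmono (k + 3) (by omega)
      have e5 : k + 2 + 1 = k + 3 := rfl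
      rw [e5] at h2; omega
    · simp only [hb, if_neg hik] at h1
      by_cases hik' : i + 1 = k + 2
      · have := hmono (k + 1) (by omega)
        have hieq : i = k + 1 := by omega
        rw [hieq] at h1; omega
      · simp only [hb, if_neg hik'] at h2
        exact hd2 t i ⟨h1, h2⟩
  set T := Nat.fib (k + 4) + t + 1 with hT
  have hkT : k + 2 < T := by
    have h := succ_le_fib (k + 2)
    have e : Nat.fib (k + 2 + 2) = Nat.fib (k + 4) := rfl
    omega
  have hbsum : ∑ i ∈ range T, b i * Nat.fib (i + 2) = Nat.fib (k + 4) + t := by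
    have hsplit : ∀ i, b i * Nat.fib (i + 2)
        = d t i * Nat.fib (i + 2) + (if i = k + 2 then Nat.fib (k + 4) else 0) := by
      intro i
      by_cases hik : i = k + 2
      · have := hmono (k + 2) (by omega)
        simp [hb, hik, this]
      · simp [hb, hik]
    calc ∑ i ∈ range T, b i * Nat.fib (i + 2)
        = ∑ i ∈ range T, (d t i * Nat.fib (i + 2)
            + (if i = k + 2 then Nat.fib (k + 4) else 0)) := by
          exact Finset.sum_congr rfl (fun i _ => hsplit i)
      _ = (∑ i ∈ range T, d t i * Nat.fib (i + 2))
            + ∑ i ∈ range T, (if i = k + 2 then Nat.fib (k + 4) else 0) := by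
          rw [Finset.sum_add_distrib]
      _ = t + Nat.fib (k + 4) := by
          rw [digit_sum_ext d hd1 hd2 hd3 hd4 t T (by omega),
            Finset.sum_ite_eq' (range T) (k + 2) (fun _ => Nat.fib (k + 4)),
            if_pos (Finset.mem_range.mpr hkT)]
      _ = Nat.fib (k + 4) + t := by omega
  have hasum : ∑ i ∈ range T, d (Nat.fib (k + 4) + t) i * Nat.fib (i + 2)
      = Nat.fib (k + 4) + t :=
    digit_sum_ext d hd1 hd2 hd3 hd4 _ T (by omega)
  have huniq := zeck_unique (d (Nat.fib (k + 4) + t)) b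
    (hd1 _) (hd2 _) hb1 hb2 T (hasum.trans hbsum.symm)
  have h1 := huniq 1 (by omega)
  rw [h1]
  simp only [hb]
  rw [if_neg (by omega)]

lemma digit01 (m : ℕ) (hm : m ≤ 1) : d m 1 = 0 :=
  digit_zero d hd1 hd2 hd3 hd4 m 1 (by have e : Nat.fib (1 + 2) = 2 := rfl; omega)

lemma digit_eval (m : ℕ) (b : ℕ → ℕ) (hb1 : ∀ i, b i ≤ 1)
    (hb2 : ∀ i, ¬ (b i = 1 ∧ b (i+1) = 1))
    (hbs : ∑ i ∈ range (m + 1), b i * Nat.fib (i + 2) = m) :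
    ∀ i < m + 1, d m i = b i :=
  zeck_unique (d m) b (hd1 m) (hd2 m) hb1 hb2 (m + 1) (((hd3 m).symm).trans hbs.symm)

lemma digit2 : d 2 1 = 1 := by
  have := digit_eval d hd1 hd2 hd3 hd4 2 (fun i => if i = 1 then 1 else 0)
    (by intro i; split <;> omega)
    (by intro i ⟨h1, h2⟩; split at h1 <;> split at h2 <;> omega)
    (by decide) 1 (by omega)
  simpa using this

lemma digit3 : d 3 1 = 0 := by
  have := digit_eval d hd1 hd2 hd3 hd4 3 (fun i => if i = 2 then 1 else 0)
    (by intro i; split <;> omega)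
    (by intro i ⟨h1, h2⟩; split at h1 <;> split at h2 <;> omega)
    (by decide) 1 (by omega)
  simpa using this

lemma digit4 : d 4 1 = 0 := by
  have := digit_eval d hd1 hd2 hd3 hd4 4 (fun i => if i = 0 ∨ i = 2 then 1 else 0)
    (by intro i; split <;> omega)
    (by intro i ⟨h1, h2⟩; split at h1 <;> split at h2 <;> omega)
    (by decide) 1 (by omega)
  simpa using this

lemma sum_shift (k j : ℕ) (hj : j ≤ Nat.fib (k + 3)) :
    ∑ i ∈ range (Nat.fib (k + 4) + j), (1 - d i 1)
      = (∑ i ∈ range (Nat.fib (k + 4)), (1 - d i 1)) + ∑ i ∈ range j, (1 - d i 1) := by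
  rw [Finset.sum_range_add]
  congr 1
  refine Finset.sum_congr rfl (fun t htm => ?_)
  rw [digit_shift d hd1 hd2 hd3 hd4 k t (lt_of_lt_of_le (Finset.mem_range.mp htm) hj)]

lemma even_A : ∀ k, (∑ i ∈ range (Nat.fib (k + 4)), (1 - d i 1)) % 2 = 0 := by
  intro k
  induction k using Nat.strong_induction_on with
  | _ k ih =>
    match k with
    | 0 =>
      have e : Nat.fib 4 = 3 := rfl
      rw [e]
      rw [Finset.sum_range_succ, Finset.sum_range_succ, Finset.sum_range_succ,
        Finset.sum_range_zero, digit01 d hd1 hd2 hd3 hd4 0 (by omega),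
        digit01 d hd1 hd2 hd3 hd4 1 (by omega), digit2 d hd1 hd2 hd3 hd4]
      decide
    | 1 =>
      have e : Nat.fib 5 = 5 := rfl
      rw [e]
      rw [Finset.sum_range_succ, Finset.sum_range_succ, Finset.sum_range_succ,
        Finset.sum_range_succ, Finset.sum_range_succ,
        Finset.sum_range_zero, digit01 d hd1 hd2 hd3 hd4 0 (by omega),
        digit01 d hd1 hd2 hd3 hd4 1 (by omega), digit2 d hd1 hd2 hd3 hd4,
        digit3 d hd1 hd2 hd3 hd4, digit4 d hd1 hd2 hd3 hd4]
      decide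
    | (k + 2) =>
      have e2 : Nat.fib (k + 2 + 4) = Nat.fib (k + 1 + 4) + Nat.fib (k + 1 + 3) := by
        have e : Nat.fib (k + 6) = Nat.fib (k + 4) + Nat.fib (k + 5) := Nat.fib_add_two
        have a1 : Nat.fib (k + 2 + 4) = Nat.fib (k + 6) := rfl
        have a2 : Nat.fib (k + 1 + 4) = Nat.fib (k + 5) := rfl
        have a3 : Nat.fib (k + 1 + 3) = Nat.fib (k + 4) := rfl
        omega
      rw [e2, sum_shift d hd1 hd2 hd3 hd4 (k + 1) (Nat.fib (k + 1 + 3)) le_rfl]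
      have h1 := ih (k + 1) (by omega)
      have h2 := ih k (by omega)
      have a3 : Nat.fib (k + 1 + 3) = Nat.fib (k + 4) := rfl
      rw [a3]
      omega

end DigitPart

section Main

variable (d : ℕ → ℕ → ℕ)
variable (hd1 : ∀ m i, d m i ≤ 1)
variable (hd2 : ∀ m i, ¬ (d m i = 1 ∧ d m (i + 1) = 1))
variable (hd3 : ∀ m, m = ∑ i ∈ Finset.range (m + 1), d m i * Nat.fib (i + 2))
variable (hd4 : ∀ m i, m + 1 ≤ i → d m i = 0)

include hd1 hd2 hd3 hd4

lemma fibword_main (m : ℕ) : fibWord m = (∑ i ∈ range m, (1 - d i 1)) % 2 := by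
  induction m using Nat.strong_induction_on with
  | _ m ih =>
    by_cases h3 : m < 3
    · interval_cases m
      · rw [Finset.sum_range_zero]; rfl
      · rw [Finset.sum_range_one, digit01 d hd1 hd2 hd3 hd4 0 (by omega)]; rfl
      · rw [Finset.sum_range_succ, Finset.sum_range_one,
          digit01 d hd1 hd2 hd3 hd4 0 (by omega), digit01 d hd1 hd2 hd3 hd4 1 (by omega)]
        rfl
    · push_neg at h3
      obtain ⟨k, j, hj, rfl⟩ := exists_fib_decomp _ h3
      have hj' : j < Nat.fib (k + 1 + 2) := hj
      have hw := fibWord_shift (k + 1) j hj'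
      have ha : Nat.fib (k + 1 + 3) = Nat.fib (k + 4) := rfl
      rw [ha] at hw
      have hs := sum_shift d hd1 hd2 hd3 hd4 k j (le_of_lt hj)
      have he := even_A d hd1 hd2 hd3 hd4 k
      have hfpos : 0 < Nat.fib (k + 4) := Nat.fib_pos.mpr (by omega)
      have hih := ih j (by omega)
      rw [hw, hs, hih]
      omega

end Main


theorem fib_word_eq_runsum_second_digit
    (d : ℕ → ℕ → ℕ)
    (hd1 : ∀ m i, d m i ≤ 1)
    (hd2 : ∀ m i, ¬ (d m i = 1 ∧ d m (i + 1) = 1))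
    (hd3 : ∀ m, m = ∑ i ∈ Finset.range (m + 1), d m i * Nat.fib (i + 2))
    (hd4 : ∀ m i, m + 1 ≤ i → d m i = 0)
    (n : ℕ) :
    fibWord (n + 1) = (∑ i ∈ Finset.range (n + 1), (1 - d i 1)) % 2 := by exact fibword_main d hd1 hd2 hd3 hd4 (n + 1)
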